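/- Let z and t_{i_1}, ..., t_{i_N}, t_j be pairwise distinct complex numbers, with j not occurring among the i_k. Write the list I = (i_N,...,i_1) as I = I'' i I' with a distinguished entry i. Define ζ_L(z) as the product (∏ over consecutive pairs (c_k, c_{k-1}) of L of 1/(c_k - c_{k-1})) · 1/(first entry from the right of L minus z), ζ_∅=1, and for a nonempty list L = (c_N,...,c_1) define ω_L = ∏_{k=2}^{N} 1/(t_{c_k} - t_{c_{k-1}}), with ω of a singleton equal to 1. Then ((z - t_j)/(t_i - t_j)) ζ_I(z) = ζ_I(z) − ∑_{I' = I_2 I_1} (-1)^{|I_2|} ζ_{I_1}(z) · ω_{I'' i} · ω_{I_2* i j}, where the sum is over all decompositions of the final segment I' into concatenation I_2 I_1, and I_2* denotes reversal. -/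

import Mathlib

/-- `zeta [c_N,...,c_1] z = (∏_{k=2}^N 1/(c_k - c_{k-1})) · 1/(c_1 - z)`, `zeta [] z = 1`. -/
noncomputable def zeta : List ℂ → ℂ → ℂ
  | [], _ => 1
  | [a], z => (a - z)⁻¹
  | a :: b :: rest, z => (a - b)⁻¹ * zeta (b :: rest) z

/-- `omega [c_N,...,c_1] = ∏_{k=2}^N 1/(c_k - c_{k-1})`, with `omega` of a
singleton equal to `1` and `omega [] = 0`. -/
noncomputable def omega : List ℂ → ℂ
  | [] => 0
  | [_] => 1
  | a :: b :: rest => (a - b)⁻¹ * omega (b :: rest)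

lemma omega_append (A : List ℂ) (b : ℂ) (C : List ℂ) :
    omega (A ++ b :: C) = omega (A ++ [b]) * omega (b :: C) := by
  induction A with
  | nil => simp [omega]
  | cons x A ih =>
    cases A with
    | nil =>
      cases C with
      | nil => simp [omega]
      | cons c C => simp [omega]; try ring
    | cons y A' =>
      have : omega (x :: y :: (A' ++ b :: C)) = (x - y)⁻¹ * omega (y :: (A' ++ b :: C)) := rfl
      simp only [List.cons_append] at ih ⊢
      rw [this, ih]
      have : omega (x :: y :: (A' ++ [b])) = (x - y)⁻¹ * omega (y :: (A' ++ [b])) := rfl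
      rw [this]; ring

lemma zeta_append (A : List ℂ) (b : ℂ) (B : List ℂ) (z : ℂ) :
    zeta (A ++ b :: B) z = omega (A ++ [b]) * zeta (b :: B) z := by
  induction A with
  | nil => simp [omega]
  | cons x A ih =>
    cases A with
    | nil =>
      cases B with
      | nil => simp [zeta, omega]
      | cons c C => simp [zeta, omega]; try ring
    | cons y A' =>
      have h1 : zeta (x :: y :: (A' ++ b :: B)) z
          = (x - y)⁻¹ * zeta (y :: (A' ++ b :: B)) z := rfl
      have h2 : omega (x :: y :: (A' ++ [b])) = (x - y)⁻¹ * omega (y :: (A' ++ [b])) := rfl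
      simp only [List.cons_append] at ih ⊢
      rw [h1, ih, h2]; ring

lemma key_sum (z : ℂ) (L : List ℂ) : ∀ t : ℂ, (z :: t :: L).Pairwise (· ≠ ·) →
    (z - t) * zeta (t :: L) z =
      -∑ k ∈ Finset.range (L.length + 1),
        (-1 : ℂ) ^ k * zeta (L.drop k) z * omega ((L.take k).reverse ++ [t]) := by
  induction L with
  | nil =>
    intro t h
    have hzt : z ≠ t := by
      rcases List.pairwise_cons.mp h with ⟨h1, _⟩
      exact h1 t (by simp)
    simp [zeta, omega]
    field_simp
    ring
  | cons a L ih =>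
    intro t h
    have hzt : z ≠ t := (List.pairwise_cons.mp h).1 t (by simp)
    have hta : t ≠ a := by
      rcases List.pairwise_cons.mp h with ⟨_, h2⟩
      exact (List.pairwise_cons.mp h2).1 a (by simp)
    have hP : (z :: a :: L).Pairwise (· ≠ ·) := by
      have : (z :: a :: L).Sublist (z :: t :: a :: L) :=
        (List.Sublist.cons t (List.Sublist.refl _)).cons₂ z
      exact h.sublist this
    have IH := ih a hP
    -- peel off the k = 0 term
    rw [Finset.sum_range_succ']
    simp only [List.length_cons]
    have hstep : ∀ k ∈ Finset.range (L.length + 1),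
        (-1 : ℂ) ^ (k + 1) * zeta ((a :: L).drop (k + 1)) z *
          omega (((a :: L).take (k + 1)).reverse ++ [t])
        = (-(a - t)⁻¹) * ((-1 : ℂ) ^ k * zeta (L.drop k) z *
            omega ((L.take k).reverse ++ [a])) := by
      intro k _
      have h1 : ((a :: L).take (k + 1)).reverse = (L.take k).reverse ++ [a] := by
        simp
      have h2 : ((L.take k).reverse ++ [a]) ++ [t] = (L.take k).reverse ++ a :: [t] := by
        simp
      rw [List.drop_succ_cons, h1, h2, omega_append]
      have : omega (a :: [t]) = (a - t)⁻¹ := by simp [omega]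
      rw [this]; ring
    rw [Finset.sum_congr rfl hstep, ← Finset.mul_sum]
    have hz : zeta (t :: a :: L) z = (t - a)⁻¹ * zeta (a :: L) z := rfl
    rw [hz]
    have hsum : ∑ k ∈ Finset.range (L.length + 1),
        (-1 : ℂ) ^ k * zeta (L.drop k) z * omega ((L.take k).reverse ++ [a])
        = -((z - a) * zeta (a :: L) z) := by
      rw [← neg_eq_iff_eq_neg] ; exact IH.symm
    rw [hsum]
    simp only [List.take_zero, List.reverse_nil, List.nil_append, pow_zero,
      List.drop_zero, one_mul]
    have hat : a - t ≠ 0 := sub_ne_zero.mpr (fun e => hta e.symm)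
    have hta' : t - a ≠ 0 := sub_ne_zero.mpr hta
    have homt : omega [t] = 1 := rfl
    rw [homt]
    field_simp
    ring

/-- Second mixed shuffle identity: with `I = I'' i I'` (lists read with head = leftmost),
`tj` an extra point, all of `z, tj` and the entries of `I` pairwise distinct,
`((z - t_j)/(t_i - t_j)) ζ_I(z) = ζ_I(z) − ∑_{I'=I₂I₁} (-1)^{|I₂|} ζ_{I₁}(z) ω_{I''i} ω_{I₂* i j}`. -/
theorem mixed_shuffle₂ (z tj ti : ℂ) (I'' I' : List ℂ)
    (h : (z :: tj :: (I'' ++ ti :: I')).Pairwise (· ≠ ·)) :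
    ((z - tj) / (ti - tj)) * zeta (I'' ++ ti :: I') z =
      zeta (I'' ++ ti :: I') z -
        ∑ k ∈ Finset.range (I'.length + 1),
          (-1 : ℂ) ^ k * zeta (I'.drop k) z * omega (I'' ++ [ti]) *
            omega ((I'.take k).reverse ++ [ti, tj]) := by
  have htij : ti ≠ tj := by
    rcases List.pairwise_cons.mp h with ⟨_, h2⟩
    have := (List.pairwise_cons.mp h2).1 ti (by simp)
    exact fun e => this e.symm
  have hsub : (z :: ti :: I').Sublist (z :: tj :: (I'' ++ ti :: I')) := by
    refine List.Sublist.cons₂ z ?_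
    exact List.Sublist.cons tj (List.sublist_append_right I'' (ti :: I'))
  have hP : (z :: ti :: I').Pairwise (· ≠ ·) := h.sublist hsub
  have hkey := key_sum z I' ti hP
  have hz : zeta (I'' ++ ti :: I') z = omega (I'' ++ [ti]) * zeta (ti :: I') z :=
    zeta_append I'' ti I' z
  have hω : ∀ k, omega ((I'.take k).reverse ++ [ti, tj])
      = omega ((I'.take k).reverse ++ [ti]) * (ti - tj)⁻¹ := by
    intro k
    have : (I'.take k).reverse ++ [ti, tj] = (I'.take k).reverse ++ ti :: [tj] := rfl
    rw [this, omega_append]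
    have : omega (ti :: [tj]) = (ti - tj)⁻¹ * omega [tj] := rfl
    rw [this]; simp [omega]
  have hsum : ∑ k ∈ Finset.range (I'.length + 1),
      (-1 : ℂ) ^ k * zeta (I'.drop k) z * omega (I'' ++ [ti]) *
        omega ((I'.take k).reverse ++ [ti, tj])
      = omega (I'' ++ [ti]) * (ti - tj)⁻¹ *
        ∑ k ∈ Finset.range (I'.length + 1),
          (-1 : ℂ) ^ k * zeta (I'.drop k) z * omega ((I'.take k).reverse ++ [ti]) := by
    rw [Finset.mul_sum]
    refine Finset.sum_congr rfl fun k _ => ?_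
    rw [hω k]; ring
  have hS : ∑ k ∈ Finset.range (I'.length + 1),
      (-1 : ℂ) ^ k * zeta (I'.drop k) z * omega ((I'.take k).reverse ++ [ti])
      = -((z - ti) * zeta (ti :: I') z) := by
    rw [← neg_eq_iff_eq_neg]; exact hkey.symm
  rw [hsum, hS, hz]
  have htij' : ti - tj ≠ 0 := sub_ne_zero.mpr htij
  field_simp
  ring
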